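/- For every α with 0 < α ≤ 1, there exists an instance with identical resources that admits no α-MMS-init allocation. Concretely, choose n with 1 < (α/3)·H_n where H_n is the n-th harmonic number, take m = 2n identical resources, and let agent i (for i = 1, …, n) have initial utility b_i = m^{i−1} and per-resource utility m^{i−1}; then no allocation X satisfies b_i + u_i(X_i) ≥ α·μ_i for all agents i. -/

import Mathlib

/-- The max-min-share `μ_i` of agent `i` in the instance with `n` agents and
`m = 2n` identical resources, where agent `i` (0-indexed) has initial utility
`b_i = m^i` and per-resource utility `m^i`: the largest `q` such that some
allocation `Y` (pairwise disjoint bundles) guarantees `q ≤ b_j + u_i(Y_j)`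
for every agent `j`. -/
noncomputable def mms (n : ℕ) (i : Fin n) : ℝ :=
  sSup {q : ℝ | ∃ Y : Fin n → Finset (Fin (2 * n)),
    (∀ j k : Fin n, j ≠ k → Disjoint (Y j) (Y k)) ∧
    ∀ j : Fin n, q ≤ (2 * n : ℝ) ^ (j : ℕ) + (2 * n : ℝ) ^ (i : ℕ) * ((Y j).card : ℝ)}

/-- Counting resources in a block of integer division. -/
lemma card_filter_div (N k j : ℕ) (hk : 0 < k) (h : (j + 1) * k ≤ N) :
    (Finset.univ.filter (fun r : Fin N => (r : ℕ) / k = j)).card = k := by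
  have hcard : (Finset.univ.filter (fun r : Fin N => (r : ℕ) / k = j)).card
      = (Finset.Ico (j * k) (j * k + k)).card := by
    refine Finset.card_nbij (fun r => (r : ℕ)) ?_ ?_ ?_
    · intro a ha
      simp only [Finset.mem_coe, Finset.mem_filter, Finset.mem_univ, true_and] at ha
      simp only [Finset.mem_coe, Finset.mem_Ico]
      have hmul : (j + 1) * k = j * k + k := by ring
      have h1 : j * k ≤ (a : ℕ) := by
        calc j * k = (a : ℕ) / k * k := by rw [ha]
          _ ≤ (a : ℕ) := Nat.div_mul_le_self _ _
      have h2 : (a : ℕ) < (j + 1) * k :=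
        (Nat.div_lt_iff_lt_mul hk).1 (by omega)
      omega
    · intro a _ b _ hab
      exact Fin.val_injective hab
    · intro a ha
      simp only [Finset.coe_Ico, Set.mem_Ico] at ha
      have hmul : (j + 1) * k = j * k + k := by ring
      have haN : a < N := by omega
      refine ⟨⟨a, haN⟩, ?_, rfl⟩
      simp only [Finset.coe_filter, Finset.mem_univ, true_and, Set.mem_setOf_eq]
      exact Nat.div_eq_of_lt_le (by omega) (by omega)
  rw [hcard, Nat.card_Ico]
  omega

/-- Lower bound on the max-min share: distributing `⌊2n/(i+1)⌋` resources to each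
of the first `i+1` agents. -/
lemma mms_lower (n : ℕ) (hn : 0 < n) (i : Fin n) :
    (2 * n : ℝ) ^ (i : ℕ) * ((2 * n / ((i : ℕ) + 1) : ℕ) : ℝ) ≤ mms n i := by
  set k : ℕ := 2 * n / ((i : ℕ) + 1) with hk
  have hi1 : (i : ℕ) + 1 ≤ n := i.2
  have hkpos : 0 < k := Nat.one_le_div_iff (by omega) |>.2 (by omega)
  have hkle : k ≤ 2 * n := Nat.div_le_self _ _
  have hm1 : (1 : ℝ) ≤ 2 * n := by
    have : (1 : ℕ) ≤ 2 * n := by omega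
    exact_mod_cast this
  have hm0 : (0 : ℝ) ≤ 2 * n := by linarith
  apply le_csSup
  · -- bounded above
    refine ⟨1 + (2 * n : ℝ) ^ (i : ℕ) * (2 * n), ?_⟩
    rintro q ⟨Y, -, hY⟩
    have h0 := hY ⟨0, hn⟩
    simp only [pow_zero] at h0
    have hcard : ((Y ⟨0, hn⟩).card : ℝ) ≤ 2 * n := by
      have := Finset.card_le_univ (Y ⟨0, hn⟩)
      simp only [Finset.card_univ, Fintype.card_fin] at this
      exact_mod_cast this
    have hpow : (0 : ℝ) ≤ (2 * n : ℝ) ^ (i : ℕ) := pow_nonneg hm0 _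
    calc q ≤ 1 + (2 * n : ℝ) ^ (i : ℕ) * ((Y ⟨0, hn⟩).card : ℝ) := h0
      _ ≤ 1 + (2 * n : ℝ) ^ (i : ℕ) * (2 * n) := by nlinarith
  · -- membership
    refine ⟨fun j => Finset.univ.filter (fun r : Fin (2 * n) => (r : ℕ) / k = (j : ℕ)), ?_, ?_⟩
    · intro j l hjl
      rw [Finset.disjoint_left]
      intro a ha hb
      simp only [Finset.mem_filter, Finset.mem_univ, true_and] at ha hb
      exact hjl (Fin.val_injective (ha ▸ hb))
    · intro j
      have hpow : (0 : ℝ) ≤ (2 * n : ℝ) ^ (j : ℕ) := pow_nonneg hm0 _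
      rcases le_or_gt (j : ℕ) (i : ℕ) with hji | hij
      · have hc : (Finset.univ.filter (fun r : Fin (2 * n) => (r : ℕ) / k = (j : ℕ))).card = k := by
          apply card_filter_div _ _ _ hkpos
          calc ((j : ℕ) + 1) * k ≤ ((i : ℕ) + 1) * k := by
                exact Nat.mul_le_mul_right _ (by omega)
            _ ≤ 2 * n := Nat.mul_div_le _ _ |>.trans_eq (by ring_nf) |>.trans (le_refl _)
        rw [hc]
        linarith
      · -- j > i : b_j alone already exceeds the guarantee
        have hcard : (0 : ℝ) ≤ (2 * n : ℝ) ^ (i : ℕ) *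
            (((Finset.univ.filter (fun r : Fin (2 * n) => (r : ℕ) / k = (j : ℕ))).card : ℝ)) := by
          positivity
        have hkr : ((k : ℕ) : ℝ) ≤ 2 * n := by exact_mod_cast hkle
        have hstep : (2 * n : ℝ) ^ (i : ℕ) * (k : ℝ) ≤ (2 * n : ℝ) ^ (j : ℕ) := by
          calc (2 * n : ℝ) ^ (i : ℕ) * (k : ℝ)
              ≤ (2 * n : ℝ) ^ (i : ℕ) * (2 * n) := by
                have : (0 : ℝ) ≤ (2 * n : ℝ) ^ (i : ℕ) := pow_nonneg hm0 _
                nlinarith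
            _ = (2 * n : ℝ) ^ ((i : ℕ) + 1) := by ring
            _ ≤ (2 * n : ℝ) ^ (j : ℕ) := pow_le_pow_right₀ hm1 (by omega)
        linarith

/-- For every `0 < α ≤ 1`, choosing `n` with `1 < (α/3)·H_n`, the instance with
`m = 2n` identical resources and `b_i = u_i({r}) = m^{i-1}` admits no
`α`-MMS-init allocation. -/
theorem stmt_8 (α : ℝ) (hα0 : 0 < α) (hα1 : α ≤ 1) (n : ℕ)
    (hn : 1 < α / 3 * ∑ i ∈ Finset.range n, (1 : ℝ) / (i + 1)) :
    ¬ ∃ X : Fin n → Finset (Fin (2 * n)),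
        (∀ j k : Fin n, j ≠ k → Disjoint (X j) (X k)) ∧
        ∀ i : Fin n,
          α * mms n i ≤ (2 * n : ℝ) ^ (i : ℕ) + (2 * n : ℝ) ^ (i : ℕ) * ((X i).card : ℝ) := by
  rintro ⟨X, hdisj, hX⟩
  have hn0 : 0 < n := by
    rcases Nat.eq_zero_or_pos n with h | h
    · subst h; simp at hn; linarith
    · exact h
  have hm0 : (0 : ℝ) < 2 * n := by
    have : (0 : ℕ) < 2 * n := by omega
    exact_mod_cast this
  -- per-agent lower bound on the received bundle size
  have key : ∀ i : Fin n, α * ((n : ℝ) / ((i : ℕ) + 1)) - 1 ≤ ((X i).card : ℝ) := by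
    intro i
    set k : ℕ := 2 * n / ((i : ℕ) + 1) with hkdef
    have hi1 : (i : ℕ) + 1 ≤ n := i.2
    -- n ≤ k * (i+1)
    have hknat : n ≤ k * ((i : ℕ) + 1) := by
      have hmod : ((i : ℕ) + 1) * k + 2 * n % ((i : ℕ) + 1) = 2 * n :=
        Nat.div_add_mod _ _
      have hlt := Nat.mod_lt (2 * n) (y := (i : ℕ) + 1) (by omega)
      rw [mul_comm]
      omega
    have h1 : (n : ℝ) / ((i : ℕ) + 1) ≤ (k : ℝ) := by
      rw [div_le_iff₀ (by positivity)]
      have : (n : ℝ) ≤ (k : ℝ) * (((i : ℕ) : ℝ) + 1) := by exact_mod_cast hknat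
      linarith
    have hlow := mms_lower n hn0 i
    have hpow : (0 : ℝ) < (2 * n : ℝ) ^ (i : ℕ) := pow_pos hm0 _
    have h2 : α * ((2 * n : ℝ) ^ (i : ℕ) * (k : ℝ)) ≤
        (2 * n : ℝ) ^ (i : ℕ) + (2 * n : ℝ) ^ (i : ℕ) * ((X i).card : ℝ) := by
      calc α * ((2 * n : ℝ) ^ (i : ℕ) * (k : ℝ)) ≤ α * mms n i := by nlinarith
        _ ≤ _ := hX i
    have h3 : α * (k : ℝ) ≤ 1 + ((X i).card : ℝ) := by
      rw [show α * ((2 * n : ℝ) ^ (i : ℕ) * (k : ℝ))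
          = (2 * n : ℝ) ^ (i : ℕ) * (α * (k : ℝ)) by ring] at h2
      nlinarith
    have h4 : α * ((n : ℝ) / ((i : ℕ) + 1)) ≤ α * (k : ℝ) :=
      mul_le_mul_of_nonneg_left h1 (le_of_lt hα0)
    linarith
  -- total number of resources bounds the sum of bundle sizes
  have hsumcard : (∑ i : Fin n, ((X i).card : ℝ)) ≤ 2 * n := by
    have hb : ∑ i : Fin n, (X i).card = (Finset.univ.biUnion X).card :=
      (Finset.card_biUnion (fun j _ l _ h => hdisj j l h)).symm
    have hle : (Finset.univ.biUnion X).card ≤ 2 * n := by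
      have := Finset.card_le_univ (Finset.univ.biUnion X)
      simpa using this
    have : (∑ i : Fin n, (X i).card : ℕ) ≤ 2 * n := hb ▸ hle
    calc (∑ i : Fin n, ((X i).card : ℝ)) = ((∑ i : Fin n, (X i).card : ℕ) : ℝ) := by
          push_cast; ring
      _ ≤ 2 * n := by exact_mod_cast this
  -- summing the per-agent bounds
  have hsum : ∑ i : Fin n, (α * ((n : ℝ) / ((i : ℕ) + 1)) - 1) ≤ 2 * n :=
    le_trans (Finset.sum_le_sum fun i _ => key i) hsumcard
  have heq : ∑ i : Fin n, (α * ((n : ℝ) / ((i : ℕ) + 1)) - 1)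
      = α * n * (∑ i ∈ Finset.range n, (1 : ℝ) / (i + 1)) - n := by
    rw [Fin.sum_univ_eq_sum_range (fun i => α * ((n : ℝ) / ((i : ℕ) + 1)) - 1),
      Finset.sum_sub_distrib, Finset.mul_sum]
    simp only [Finset.sum_const, Finset.card_range, nsmul_eq_mul, mul_one]
    congr 1
    exact Finset.sum_congr rfl fun x _ => by field_simp
  rw [heq] at hsum
  have hnn : (1 : ℝ) ≤ n := by exact_mod_cast hn0
  set S : ℝ := ∑ i ∈ Finset.range n, (1 : ℝ) / (i + 1)
  have hS : 3 < α * S := by linarith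
  nlinarith
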